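/- If the TM is resolvent, then in the observation-supplemented traces the reward non-Markovianity is purely reward-machine-based: for the augmented Det-POMDP whose observations are pairs (o, q) with q updated by the TM, any RM that is resolvent for the original Det-POMDP (with δ_U and δ_R lifted to augmented observations by ignoring the q-component for rewards and using the original labels) is resolvent for the augmented process, and the augmented process has Markovian (deterministic, history-independent) observation transitions. -/
import Mathlib


/-- One step of a Det-POMDP trajectory together with the Reward-Machine state
and the Transition-Machine state. -/
def runTMRM {S A O U Q Lbl : Type*} (P : S → A → S) (Z : S → O) (L : O → Lbl)
    (δU : U → Lbl → U) (δQ : Q → Lbl → Q) (init : S × U × Q) (as : List A) :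
    S × U × Q :=
  as.foldl (fun p a => (P p.1 a, δU p.2.1 (L (Z p.1)), δQ p.2.2 (L (Z p.1)))) init

/-- If the TM is resolvent, then in the observation-supplemented
traces the reward non-Markovianity is purely reward-machine-based: for the
augmented process whose observations are the pairs `(o, q)` (with `q` updated by
the TM and labeling `L' (o, q) = L o`), (i) any RM resolvent for the original
Det-POMDP, lifted to augmented observations by ignoring the `q`-component
(`δR' u (o, q) a = δR u o a`), is resolvent for the augmented process, and
(ii) the augmented process has Markovian (deterministic, history-independent)
observation transitions: the next augmented observation is a function of the
current augmented observation and the action. -/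
theorem observation_supplement_reward_only_nonmarkov
    {S A O U Q Lbl : Type*}
    (s0 : S) (P : S → A → S) (Z : S → O) (L : O → Lbl) (R : S → A → ℝ)
    (u0 : U) (δU : U → Lbl → U) (δR : U → O → A → ℝ)
    (q0 : Q) (δQ : Q → Lbl → Q) (δT : Q → O → A → O)
    (hresT : ∀ (as : List A) (a : A),
      δT (runTMRM P Z L δU δQ (s0, u0, q0) as).2.2
          (Z (runTMRM P Z L δU δQ (s0, u0, q0) as).1) a
        = Z (P (runTMRM P Z L δU δQ (s0, u0, q0) as).1 a))
    (hresR : ∀ (as : List A) (a : A),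
      δR (runTMRM P Z L δU δQ (s0, u0, q0) as).2.1
          (Z (runTMRM P Z L δU δQ (s0, u0, q0) as).1) a
        = R (runTMRM P Z L δU δQ (s0, u0, q0) as).1 a) :
    -- (i) the lifted RM is resolvent for the augmented process
    (∀ (as : List A) (a : A),
      (fun (u : U) (oq : O × Q) (a : A) => δR u oq.1 a)
          (runTMRM P Z L δU δQ (s0, u0, q0) as).2.1
          (Z (runTMRM P Z L δU δQ (s0, u0, q0) as).1,
            (runTMRM P Z L δU δQ (s0, u0, q0) as).2.2) a
        = R (runTMRM P Z L δU δQ (s0, u0, q0) as).1 a)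
    -- (ii) the augmented observation transitions are Markovian
    ∧ ∃ F : (O × Q) → A → (O × Q), ∀ (as : List A) (a : A),
        (Z (P (runTMRM P Z L δU δQ (s0, u0, q0) as).1 a),
          δQ (runTMRM P Z L δU δQ (s0, u0, q0) as).2.2
            (L (Z (runTMRM P Z L δU δQ (s0, u0, q0) as).1)))
          = F (Z (runTMRM P Z L δU δQ (s0, u0, q0) as).1,
               (runTMRM P Z L δU δQ (s0, u0, q0) as).2.2) a := by
  refine ⟨fun as a => hresR as a, ⟨fun oq a => (δT oq.2 oq.1 a, δQ oq.2 (L oq.1)), fun as a => ?_⟩⟩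
  simp [← hresT as a]
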